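/- arXiv:1412.6966 — 3 statements merged into one kernel-verified Lean document; each statement's English description precedes it below -/
import Mathlib

section
/- Let g : ℝ → ℝ be a convex, three times differentiable function such that |g'''(t)| ≤ S·g''(t) for all t ∈ ℝ, for some S > 0. Then for all t ≥ 0, (g''(0)/S²)·φ(−St) ≤ g(t) − g(0) − g'(0)·t ≤ (g''(0)/S²)·φ(St), where φ(x) = eˣ − x − 1. -/
private lemma aux_nonneg (f f' : ℝ → ℝ) (hf : ∀ x, HasDerivAt f (f' x) x)
    (h0 : f 0 = 0) (hpos : ∀ x, 0 ≤ x → 0 ≤ f' x) :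
    ∀ t, 0 ≤ t → 0 ≤ f t := by
  intro t ht
  have hm : MonotoneOn f (Set.Ici (0:ℝ)) := by
    apply monotoneOn_of_deriv_nonneg (convex_Ici 0)
    · exact fun x _ => (hf x).continuousAt.continuousWithinAt
    · intro x hx
      exact (hf x).differentiableAt.differentiableWithinAt
    · intro x hx
      rw [(hf x).deriv]
      exact hpos x (le_of_lt (by simpa using hx))
  have := hm Set.self_mem_Ici ht ht
  linarith [h0 ▸ this]

/-- Bach's lemma: if `g` is convex, three times differentiable with `|g'''| ≤ S g''`,
then for all `t ≥ 0`,
`(g''(0)/S²) φ(−St) ≤ g(t) − g(0) − g'(0) t ≤ (g''(0)/S²) φ(St)` with `φ(x) = eˣ − x − 1`. -/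
theorem stmt7 (g g' g'' g''' : ℝ → ℝ) (S : ℝ) (hS : 0 < S)
    (hd1 : ∀ t, HasDerivAt g (g' t) t)
    (hd2 : ∀ t, HasDerivAt g' (g'' t) t)
    (hd3 : ∀ t, HasDerivAt g'' (g''' t) t)
    (hconv : ∀ t, 0 ≤ g'' t)
    (hbound : ∀ t, |g''' t| ≤ S * g'' t) :
    ∀ t : ℝ, 0 ≤ t →
      (g'' 0 / S ^ 2) * (Real.exp (-S * t) - (-S * t) - 1)
          ≤ g t - g 0 - g' 0 * t ∧
      g t - g 0 - g' 0 * t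
          ≤ (g'' 0 / S ^ 2) * (Real.exp (S * t) - S * t - 1) := by
  have hS' : S ≠ 0 := ne_of_gt hS
  -- derivative of exp (S * x) and exp (-S * x)
  have hexp : ∀ x : ℝ, HasDerivAt (fun y => Real.exp (S * y)) (S * Real.exp (S * x)) x := by
    intro x
    have := ((hasDerivAt_id x).const_mul S).exp
    simpa [mul_comm] using this
  have hexpn : ∀ x : ℝ, HasDerivAt (fun y => Real.exp (-S * y)) (-S * Real.exp (-S * x)) x := by
    intro x
    have := ((hasDerivAt_id x).const_mul (-S)).exp
    simpa [mul_comm] using this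
  -- Step 1: g'' u ≤ g'' 0 * exp (S u) for u ≥ 0
  have hup : ∀ u, 0 ≤ u → g'' u ≤ g'' 0 * Real.exp (S * u) := by
    have key := aux_nonneg (fun u => g'' 0 - g'' u * Real.exp (-S * u))
      (fun u => (S * g'' u - g''' u) * Real.exp (-S * u))
      (fun u => by
        have h := ((hd3 u).mul (hexpn u)).const_sub (g'' 0)
        exact h.congr_deriv (by ring))
      (by simp)
      (fun u _ => by
        have h1 : g''' u ≤ S * g'' u := le_of_abs_le (hbound u)
        exact mul_nonneg (by linarith) (Real.exp_pos _).le)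
    intro u hu
    have h := key u hu
    have e1 : Real.exp (-S * u) * Real.exp (S * u) = 1 := by
      rw [← Real.exp_add]; ring_nf; exact Real.exp_zero
    have h2 : g'' u * Real.exp (-S * u) * Real.exp (S * u) = g'' u := by
      rw [mul_assoc, e1, mul_one]
    linarith [mul_le_mul_of_nonneg_right (by linarith : g'' u * Real.exp (-S * u) ≤ g'' 0)
      (Real.exp_pos (S * u)).le, h2]
  -- Step 1': g'' 0 * exp (-S u) ≤ g'' u for u ≥ 0
  have hlo : ∀ u, 0 ≤ u → g'' 0 * Real.exp (-S * u) ≤ g'' u := by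
    have key := aux_nonneg (fun u => g'' u * Real.exp (S * u) - g'' 0)
      (fun u => (g''' u + S * g'' u) * Real.exp (S * u))
      (fun u => by
        have h := ((hd3 u).mul (hexp u)).sub_const (g'' 0)
        exact h.congr_deriv (by ring))
      (by simp)
      (fun u _ => by
        have h1 : -(S * g'' u) ≤ g''' u := neg_le_of_abs_le (hbound u)
        have h2 : 0 ≤ g''' u + S * g'' u := by linarith
        exact mul_nonneg h2 (Real.exp_pos _).le)
    intro u hu
    have h := key u hu
    have e1 : Real.exp (-S * u) * Real.exp (S * u) = 1 := by
      rw [← Real.exp_add]; ring_nf; exact Real.exp_zero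
    have h2 : g'' u * Real.exp (S * u) * Real.exp (-S * u) = g'' u := by
      rw [mul_assoc, mul_comm (Real.exp (S * u)), e1, mul_one]
    linarith [mul_le_mul_of_nonneg_right (by linarith : g'' 0 ≤ g'' u * Real.exp (S * u))
      (Real.exp_pos (-S * u)).le, h2]
  -- Step 2: g' u - g' 0 ≤ (g'' 0 / S) * (exp (S u) - 1) for u ≥ 0
  have hup1 : ∀ u, 0 ≤ u → g' u - g' 0 ≤ (g'' 0 / S) * (Real.exp (S * u) - 1) := by
    have key := aux_nonneg
      (fun u => (g'' 0 / S) * (Real.exp (S * u) - 1) - (g' u - g' 0))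
      (fun u => g'' 0 * Real.exp (S * u) - g'' u)
      (fun u => by
        have h := ((((hexp u).sub_const 1).const_mul (g'' 0 / S))).sub
          ((hd2 u).sub_const (g' 0))
        exact h.congr_deriv (by field_simp))
      (by simp)
      (fun u hu => by linarith [hup u hu])
    intro u hu
    have h := key u hu
    linarith
  have hlo1 : ∀ u, 0 ≤ u → (g'' 0 / S) * (1 - Real.exp (-S * u)) ≤ g' u - g' 0 := by
    have key := aux_nonneg
      (fun u => (g' u - g' 0) - (g'' 0 / S) * (1 - Real.exp (-S * u)))
      (fun u => g'' u - g'' 0 * Real.exp (-S * u))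
      (fun u => by
        have h := ((hd2 u).sub_const (g' 0)).sub
          (((hexpn u).const_sub 1).const_mul (g'' 0 / S))
        exact h.congr_deriv (by field_simp))
      (by simp)
      (fun u hu => by linarith [hlo u hu])
    intro u hu
    have h := key u hu
    linarith
  -- Step 3
  intro t ht
  constructor
  · have key := aux_nonneg
      (fun u => (g u - g 0 - g' 0 * u) -
        (g'' 0 / S ^ 2) * (Real.exp (-S * u) - (-S * u) - 1))
      (fun u => (g' u - g' 0) - (g'' 0 / S) * (1 - Real.exp (-S * u)))
      (fun u => by
        have h := (((hd1 u).sub_const (g 0)).sub ((hasDerivAt_id u).const_mul (g' 0))).sub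
          ((((hexpn u).sub ((hasDerivAt_id u).const_mul (-S))).sub_const 1).const_mul
            (g'' 0 / S ^ 2))
        exact h.congr_deriv (by field_simp; ring))
      (by simp)
      (fun u hu => by linarith [hlo1 u hu])
    have h := key t ht
    linarith
  · have key := aux_nonneg
      (fun u => (g'' 0 / S ^ 2) * (Real.exp (S * u) - S * u - 1) -
        (g u - g 0 - g' 0 * u))
      (fun u => (g'' 0 / S) * (Real.exp (S * u) - 1) - (g' u - g' 0))
      (fun u => by
        have h := (((((hexp u).sub ((hasDerivAt_id u).const_mul S)).sub_const 1).const_mul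
            (g'' 0 / S ^ 2))).sub
          (((hd1 u).sub_const (g 0)).sub ((hasDerivAt_id u).const_mul (g' 0)))
        exact h.congr_deriv (by field_simp))
      (by simp)
      (fun u hu => by linarith [hup1 u hu])
    have h := key t ht
    linarith
end

section
/- The function x ↦ φ(x)/x² with φ(x) = eˣ − x − 1 (extended by the value 1/2 at x = 0) is nonnegative and monotonically increasing on ℝ. -/
open Real Set

private lemma aux_hp (x : ℝ) (hx : x ≠ 0) : 0 < (x - 1) * Real.exp x + 1 := by
  have h1 := Real.add_one_lt_exp (neg_ne_zero.mpr hx)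
  have h2 : Real.exp (-x) * Real.exp x = 1 := by
    rw [← Real.exp_add]; simp
  nlinarith [Real.exp_pos x, Real.exp_pos (-x)]

private noncomputable def auxH (x : ℝ) : ℝ := (x - 2) * Real.exp x + x + 2

private lemma auxH_deriv (x : ℝ) : HasDerivAt auxH ((x - 1) * Real.exp x + 1) x := by
  have h1 : HasDerivAt (fun y : ℝ => (y - 2) * Real.exp y)
      (1 * Real.exp x + (x - 2) * Real.exp x) x :=
    ((hasDerivAt_id x).sub_const 2).mul (Real.hasDerivAt_exp x)
  have h2 := (h1.add (hasDerivAt_id x)).add_const 2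
  simp only [Pi.add_apply, id_eq] at h2
  refine (h2 : HasDerivAt auxH _ x).congr_deriv ?_
  ring

private lemma auxH_sign {x : ℝ} (hx : x ≠ 0) : 0 < x * auxH x := by
  have hderiv : ∀ y : ℝ, deriv auxH y = (y - 1) * Real.exp y + 1 :=
    fun y => (auxH_deriv y).deriv
  have hcont : Continuous auxH := by
    have : Differentiable ℝ auxH := fun y => (auxH_deriv y).differentiableAt
    exact this.continuous
  have hH0 : auxH 0 = 0 := by simp [auxH]
  rcases hx.lt_or_gt with h | h
  · have hmono : StrictMonoOn auxH (Iic 0) := by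
      apply strictMonoOn_of_deriv_pos (convex_Iic 0) hcont.continuousOn
      intro y hy
      rw [interior_Iic] at hy
      rw [hderiv]
      exact aux_hp y (ne_of_lt hy)
    have : auxH x < auxH 0 := hmono (mem_Iic.mpr (le_of_lt h)) (mem_Iic.mpr le_rfl) h
    rw [hH0] at this
    exact mul_pos_of_neg_of_neg h this
  · have hmono : StrictMonoOn auxH (Ici 0) := by
      apply strictMonoOn_of_deriv_pos (convex_Ici 0) hcont.continuousOn
      intro y hy
      rw [interior_Ici] at hy
      rw [hderiv]
      exact aux_hp y (ne_of_gt hy)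
    have : auxH 0 < auxH x := hmono (mem_Ici.mpr le_rfl) (mem_Ici.mpr (le_of_lt h)) h
    rw [hH0] at this
    exact mul_pos h this

private noncomputable def auxF (x : ℝ) : ℝ := Real.exp x - 1 - x - x ^ 2 / 2

private lemma auxF_deriv (x : ℝ) : HasDerivAt auxF (Real.exp x - 1 - x) x := by
  have h := (((Real.hasDerivAt_exp x).sub_const 1).sub (hasDerivAt_id x)).sub
      ((((hasDerivAt_id x).pow 2)).div_const 2)
  simp only [id_eq] at h
  refine (h : HasDerivAt auxF _ x).congr_deriv ?_
  push_cast
  ring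

private lemma auxF_sign_pos {x : ℝ} (hx : 0 < x) : 0 < auxF x := by
  have hdiff : Differentiable ℝ auxF := fun y => (auxF_deriv y).differentiableAt
  have hcont : Continuous auxF := hdiff.continuous
  have hmono : StrictMonoOn auxF (Ici 0) := by
    apply strictMonoOn_of_deriv_pos (convex_Ici 0) hcont.continuousOn
    intro y hy
    rw [interior_Ici] at hy
    rw [(auxF_deriv y).deriv]
    have := Real.add_one_lt_exp (ne_of_gt hy)
    linarith
  have : auxF 0 < auxF x := hmono (mem_Ici.mpr le_rfl) (mem_Ici.mpr (le_of_lt hx)) hx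
  simpa [auxF] using this

private lemma auxF_sign_neg {x : ℝ} (hx : x < 0) : auxF x < 0 := by
  have hdiff : Differentiable ℝ auxF := fun y => (auxF_deriv y).differentiableAt
  have hcont : Continuous auxF := hdiff.continuous
  have hmono : StrictMonoOn auxF (Iic 0) := by
    apply strictMonoOn_of_deriv_pos (convex_Iic 0) hcont.continuousOn
    intro y hy
    rw [interior_Iic] at hy
    rw [(auxF_deriv y).deriv]
    have := Real.add_one_lt_exp (ne_of_lt hy)
    linarith
  have : auxF x < auxF 0 := hmono (mem_Iic.mpr (le_of_lt hx)) (mem_Iic.mpr le_rfl) hx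
  simpa [auxF] using this

private noncomputable def auxG (x : ℝ) : ℝ := (Real.exp x - x - 1) / x ^ 2

private lemma auxG_deriv {x : ℝ} (hx : x ≠ 0) :
    HasDerivAt auxG (x * auxH x / (x ^ 2) ^ 2) x := by
  have hnum : HasDerivAt (fun y : ℝ => Real.exp y - y - 1) (Real.exp x - 1) x := by
    have := ((Real.hasDerivAt_exp x).sub (hasDerivAt_id x)).sub_const 1
    simpa using this
  have hden : HasDerivAt (fun y : ℝ => y ^ 2) (2 * x ^ 1 * 1) x := (hasDerivAt_id x).pow 2
  have h := hnum.div hden (pow_ne_zero 2 hx)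
  refine (h : HasDerivAt auxG _ x).congr_deriv ?_
  unfold auxH; field_simp
  ring

private lemma auxG_mono_Ioi : StrictMonoOn auxG (Ioi 0) := by
  apply strictMonoOn_of_deriv_pos (convex_Ioi 0)
  · apply ContinuousOn.div
    · fun_prop
    · fun_prop
    · intro y hy
      exact pow_ne_zero 2 (ne_of_gt hy)
  · intro y hy
    rw [interior_Ioi] at hy
    rw [(auxG_deriv (ne_of_gt hy)).deriv]
    exact div_pos (auxH_sign (ne_of_gt hy)) (pow_pos (pow_two_pos_of_ne_zero (ne_of_gt hy)) 2)

private lemma auxG_mono_Iio : StrictMonoOn auxG (Iio 0) := by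
  apply strictMonoOn_of_deriv_pos (convex_Iio 0)
  · apply ContinuousOn.div
    · fun_prop
    · fun_prop
    · intro y hy
      exact pow_ne_zero 2 (ne_of_lt hy)
  · intro y hy
    rw [interior_Iio] at hy
    rw [(auxG_deriv (ne_of_lt hy)).deriv]
    exact div_pos (auxH_sign (ne_of_lt hy)) (pow_pos (pow_two_pos_of_ne_zero (ne_of_lt hy)) 2)

private lemma auxG_gt_half {x : ℝ} (hx : 0 < x) : (1 : ℝ) / 2 < auxG x := by
  have hF := auxF_sign_pos hx
  rw [auxG, lt_div_iff₀ (pow_two_pos_of_ne_zero (ne_of_gt hx))]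
  simp only [auxF] at hF
  nlinarith

private lemma auxG_lt_half {x : ℝ} (hx : x < 0) : auxG x < (1 : ℝ) / 2 := by
  have hF := auxF_sign_neg hx
  rw [auxG, div_lt_iff₀ (pow_two_pos_of_ne_zero (ne_of_lt hx))]
  simp only [auxF] at hF
  nlinarith

/-- The function `x ↦ φ(x)/x²` with `φ(x) = eˣ − x − 1`, extended by `1/2` at `0`,
is nonnegative and strictly increasing on `ℝ`. -/
theorem stmt9 :
    (∀ x : ℝ, 0 ≤ (if x = 0 then (1 : ℝ) / 2 else (Real.exp x - x - 1) / x ^ 2)) ∧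
    StrictMono (fun x : ℝ =>
      if x = 0 then (1 : ℝ) / 2 else (Real.exp x - x - 1) / x ^ 2) := by
  constructor
  · intro x
    split_ifs with h
    · norm_num
    · apply div_nonneg
      · have := Real.add_one_le_exp x
        linarith
      · positivity
  · intro a b hab
    simp only
    rcases lt_trichotomy b 0 with hb | hb | hb
    · rw [if_neg (ne_of_lt (hab.trans hb)), if_neg (ne_of_lt hb)]
      exact auxG_mono_Iio (hab.trans hb) hb hab
    · subst hb
      rw [if_neg (ne_of_lt hab), if_pos rfl]
      exact auxG_lt_half hab
    · rcases lt_trichotomy a 0 with ha | ha | ha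
      · rw [if_neg (ne_of_lt ha), if_neg (ne_of_gt hb)]
        exact (auxG_lt_half ha).trans (auxG_gt_half hb)
      · subst ha
        rw [if_pos rfl, if_neg (ne_of_gt hb)]
        exact auxG_gt_half hb
      · rw [if_neg (ne_of_gt ha), if_neg (ne_of_gt hb)]
        exact auxG_mono_Ioi ha hb hab
end

section
/- Let K : ℝᵖ → ℝ≥0 and l : ℝᵖ → ℝ be functions, λ₁,...,λ_K > 0 weights, G₁ ∪ ... ∪ G_K a partition of {1,...,p}, and β̂ a minimizer over ℝᵖ of β ↦ −l(β) + Σₖ λₖ‖β_{Gₖ}‖₂. Suppose there is a vector η ∈ ℝᵖ such that for all β, K(β̂) = K(β) + l(β) − l(β̂) + (β̂ − β)^T η, and suppose ‖η_{Gₖ}‖₂ ≤ λₖ for all k. Then K(β̂) ≤ inf_β { K(β) + 2 Σₖ λₖ‖β_{Gₖ}‖₂ }. -/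
open Finset

private lemma cs_sqrt {ι : Type*} (s : Finset ι) (f g : ι → ℝ) :
    ∑ i ∈ s, f i * g i ≤
      Real.sqrt (∑ i ∈ s, (f i) ^ 2) * Real.sqrt (∑ i ∈ s, (g i) ^ 2) := by
  have h := Finset.sum_mul_sq_le_sq_mul_sq s f g
  calc ∑ i ∈ s, f i * g i ≤ |∑ i ∈ s, f i * g i| := le_abs_self _
    _ = Real.sqrt ((∑ i ∈ s, f i * g i) ^ 2) := (Real.sqrt_sq_eq_abs _).symm
    _ ≤ Real.sqrt ((∑ i ∈ s, (f i) ^ 2) * (∑ i ∈ s, (g i) ^ 2)) :=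
        Real.sqrt_le_sqrt h
    _ = _ := Real.sqrt_mul (Finset.sum_nonneg fun i _ => sq_nonneg _) _

private lemma sqrt_sub_le {ι : Type*} (s : Finset ι) (a b : ι → ℝ) :
    Real.sqrt (∑ i ∈ s, (a i - b i) ^ 2) ≤
      Real.sqrt (∑ i ∈ s, (a i) ^ 2) + Real.sqrt (∑ i ∈ s, (b i) ^ 2) := by
  set A := Real.sqrt (∑ i ∈ s, (a i) ^ 2)
  set B := Real.sqrt (∑ i ∈ s, (b i) ^ 2)
  have hA : 0 ≤ A := Real.sqrt_nonneg _
  have hB : 0 ≤ B := Real.sqrt_nonneg _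
  have hA2 : A ^ 2 = ∑ i ∈ s, (a i) ^ 2 :=
    Real.sq_sqrt (Finset.sum_nonneg fun i _ => sq_nonneg _)
  have hB2 : B ^ 2 = ∑ i ∈ s, (b i) ^ 2 :=
    Real.sq_sqrt (Finset.sum_nonneg fun i _ => sq_nonneg _)
  have hcs : ∑ i ∈ s, a i * (-b i) ≤ A * B := by
    have := cs_sqrt s a (fun i => -b i)
    simpa [neg_sq] using this
  have hle : ∑ i ∈ s, (a i - b i) ^ 2 ≤ (A + B) ^ 2 := by
    have hexp : ∑ i ∈ s, (a i - b i) ^ 2 =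
        (∑ i ∈ s, (a i) ^ 2) + 2 * (∑ i ∈ s, a i * (-b i)) + (∑ i ∈ s, (b i) ^ 2) := by
      rw [Finset.mul_sum, ← Finset.sum_add_distrib, ← Finset.sum_add_distrib]
      exact Finset.sum_congr rfl fun i _ => by ring
    nlinarith [hcs]
  calc Real.sqrt (∑ i ∈ s, (a i - b i) ^ 2) ≤ Real.sqrt ((A + B) ^ 2) :=
        Real.sqrt_le_sqrt hle
    _ = A + B := Real.sqrt_sq (by positivity)

/-- Abstract slow oracle inequality for the group-Lasso. -/
theorem stmt15 (p K : ℕ) (Kf l : (Fin p → ℝ) → ℝ) (lam : Fin K → ℝ)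
    (G : Fin K → Finset (Fin p))
    (hlam : ∀ k, 0 < lam k)
    (hdisj : ∀ k k', k ≠ k' → Disjoint (G k) (G k'))
    (hcover : Finset.univ.biUnion G = Finset.univ)
    (hKnonneg : ∀ β, 0 ≤ Kf β)
    (betahat : Fin p → ℝ) (η : Fin p → ℝ)
    (hmin : ∀ β : Fin p → ℝ,
      -l betahat + ∑ k, lam k * Real.sqrt (∑ j ∈ G k, (betahat j) ^ 2)
        ≤ -l β + ∑ k, lam k * Real.sqrt (∑ j ∈ G k, (β j) ^ 2))
    (hident : ∀ β : Fin p → ℝ,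
      Kf betahat = Kf β + l β - l betahat + ∑ j, (betahat j - β j) * η j)
    (hη : ∀ k, Real.sqrt (∑ j ∈ G k, (η j) ^ 2) ≤ lam k) :
    ∀ β : Fin p → ℝ,
      Kf betahat ≤ Kf β + 2 * ∑ k, lam k * Real.sqrt (∑ j ∈ G k, (β j) ^ 2) := by
  intro β
  set A : Fin K → ℝ := fun k => Real.sqrt (∑ j ∈ G k, (betahat j) ^ 2) with hAdef
  set B : Fin K → ℝ := fun k => Real.sqrt (∑ j ∈ G k, (β j) ^ 2) with hBdef
  have hsplit : ∑ j, (betahat j - β j) * η j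
      = ∑ k, ∑ j ∈ G k, (betahat j - β j) * η j := by
    rw [← hcover, Finset.sum_biUnion]
    intro k _ k' _ hkk'
    exact hdisj k k' hkk'
  have hterm : ∀ k, ∑ j ∈ G k, (betahat j - β j) * η j ≤ lam k * (A k + B k) := by
    intro k
    have h1 : ∑ j ∈ G k, (betahat j - β j) * η j ≤
        Real.sqrt (∑ j ∈ G k, (betahat j - β j) ^ 2) *
          Real.sqrt (∑ j ∈ G k, (η j) ^ 2) :=
      cs_sqrt (G k) _ _
    have h2 : Real.sqrt (∑ j ∈ G k, (betahat j - β j) ^ 2) ≤ A k + B k :=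
      sqrt_sub_le (G k) betahat β
    have h3 := hη k
    have h4 : (0:ℝ) ≤ Real.sqrt (∑ j ∈ G k, (betahat j - β j) ^ 2) :=
      Real.sqrt_nonneg _
    have h5 : (0:ℝ) ≤ Real.sqrt (∑ j ∈ G k, (η j) ^ 2) := Real.sqrt_nonneg _
    have h6 : (0:ℝ) ≤ A k + B k := by positivity
    nlinarith [hlam k]
  have hsum : ∑ j, (betahat j - β j) * η j ≤ ∑ k, lam k * (A k + B k) := by
    rw [hsplit]; exact Finset.sum_le_sum fun k _ => hterm k
  have hm := hmin β
  have hid := hident β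
  have : Kf betahat ≤ Kf β + (∑ k, lam k * B k - ∑ k, lam k * A k)
      + ∑ k, lam k * (A k + B k) := by linarith
  have hfin : ∑ k, lam k * B k - ∑ k, lam k * A k + ∑ k, lam k * (A k + B k)
      = 2 * ∑ k, lam k * B k := by
    rw [← Finset.sum_sub_distrib, ← Finset.sum_add_distrib, Finset.mul_sum]
    congr 1; ext k; ring
  linarith [hfin, this]
end
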